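/- Let Y_1, ..., Y_m be random variables with Y_i ∈ [0,1] that are 1-correlated, i.e., E[∏_{i∈U} Y_i] ≤ ∏_{i∈U} E[Y_i] for every subset U ⊆ [m]. Then for any ε > 0, Pr[∑_i Y_i ≥ (1+ε)·E[∑_i Y_i]] ≤ exp(−ε²·E[∑_i Y_i]/(2+ε)). -/

import Mathlib

open MeasureTheory

lemma two_mul_div_le_log {x : ℝ} (hx : 0 ≤ x) :
    2 * x / (2 + x) ≤ Real.log (1 + x) := by
  have key : ∀ y : ℝ, 0 ≤ y →
      HasDerivAt (fun z => Real.log (1 + z) - 2 * z / (2 + z))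
        (1 / (1 + y) - 4 / (2 + y) ^ 2) y := by
    intro y hy
    have h1 : HasDerivAt (fun z : ℝ => 1 + z) 1 y := by
      simpa using (hasDerivAt_id y).const_add (1 : ℝ)
    have hlog : HasDerivAt (fun z => Real.log (1 + z)) (1 / (1 + y)) y := by
      simpa using h1.log (by positivity)
    have h2 : HasDerivAt (fun z : ℝ => 2 * z) 2 y := by
      simpa using (hasDerivAt_id y).const_mul (2 : ℝ)
    have h3 : HasDerivAt (fun z : ℝ => 2 + z) 1 y := by
      simpa using (hasDerivAt_id y).const_add (2 : ℝ)
    have hdiv : HasDerivAt (fun z : ℝ => 2 * z / (2 + z))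
        ((2 * (2 + y) - 2 * y * 1) / (2 + y) ^ 2) y := h2.div h3 (by positivity)
    have heq : (2 * (2 + y) - 2 * y * 1) / (2 + y) ^ 2 = 4 / (2 + y) ^ 2 := by
      ring_nf
    rw [heq] at hdiv
    exact hlog.sub hdiv
  have hmono : MonotoneOn (fun z => Real.log (1 + z) - 2 * z / (2 + z)) (Set.Ici 0) := by
    apply monotoneOn_of_deriv_nonneg (convex_Ici 0)
    · intro y hy
      exact ((key y hy).continuousAt).continuousWithinAt
    · intro y hy
      rw [interior_Ici] at hy
      exact (key y (le_of_lt hy)).differentiableAt.differentiableWithinAt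
    · intro y hy
      rw [interior_Ici] at hy
      rw [(key y (le_of_lt hy)).deriv]
      have hy' : (0:ℝ) < y := hy
      rw [sub_nonneg, div_le_div_iff₀ (by positivity) (by positivity)]
      nlinarith
  have h0 := hmono Set.self_mem_Ici (Set.mem_Ici.2 hx) hx
  simp only [add_zero, Real.log_one, mul_zero, zero_div, sub_zero, sub_self] at h0
  linarith [h0]

lemma expand_prod_one_add {m : ℕ} (ε : ℝ) (f : Fin m → ℝ) :
    ∏ i, (1 + ε * f i) =
      ∑ U ∈ (Finset.univ : Finset (Fin m)).powerset, ε ^ U.card * ∏ i ∈ U, f i := by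
  have h := Finset.prod_add (fun i => ε * f i) (fun _ => (1:ℝ)) Finset.univ
  simp only [Finset.prod_const_one, mul_one] at h
  calc ∏ i, (1 + ε * f i) = ∏ i, (ε * f i + 1) :=
        Finset.prod_congr rfl fun i _ => by ring
    _ = ∑ U ∈ Finset.univ.powerset, ∏ i ∈ U, (ε * f i) := h
    _ = ∑ U ∈ Finset.univ.powerset, ε ^ U.card * ∏ i ∈ U, f i := by
        refine Finset.sum_congr rfl fun U _ => ?_
        rw [Finset.prod_mul_distrib, Finset.prod_const]

/-- Chernoff bound for 1-correlated random variables in `[0,1]`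
(Panconesi–Srinivasan). -/
theorem chernoff_one_correlated {Ω : Type*} [MeasurableSpace Ω]
    (μ : Measure Ω) [IsProbabilityMeasure μ] (m : ℕ) (Y : Fin m → Ω → ℝ)
    (hmeas : ∀ i, Measurable (Y i))
    (hbdd : ∀ i ω, Y i ω ∈ Set.Icc (0 : ℝ) 1)
    (hcorr : ∀ U : Finset (Fin m),
      (∫ ω, ∏ i ∈ U, Y i ω ∂μ) ≤ ∏ i ∈ U, ∫ ω, Y i ω ∂μ)
    (ε : ℝ) (hε : 0 < ε) :
    (μ {ω | (1 + ε) * (∑ i, ∫ ω', Y i ω' ∂μ) ≤ ∑ i, Y i ω}).toReal ≤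
      Real.exp (-(ε ^ 2 * (∑ i, ∫ ω', Y i ω' ∂μ)) / (2 + ε)) := by
  classical
  set M : ℝ := ∑ i, ∫ ω', Y i ω' ∂μ with hMdef
  have hμi_nonneg : ∀ i : Fin m, 0 ≤ ∫ ω', Y i ω' ∂μ := fun i =>
    integral_nonneg fun ω => (hbdd i ω).1
  have hM_nonneg : 0 ≤ M := Finset.sum_nonneg fun i _ => hμi_nonneg i
  set t : ℝ := Real.log (1 + ε) with ht
  have ht_pos : 0 < t := Real.log_pos (by linarith)
  have hexpt : Real.exp t = 1 + ε := Real.exp_log (by linarith)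
  -- integrability of subproducts
  have hintU : ∀ U : Finset (Fin m), Integrable (fun ω => ∏ i ∈ U, Y i ω) μ := by
    intro U
    have hmU : Measurable fun ω => ∏ i ∈ U, Y i ω :=
      Finset.measurable_prod U fun i _ => hmeas i
    refine (integrable_const (1:ℝ)).mono' hmU.aestronglyMeasurable ?_
    filter_upwards with ω
    rw [Real.norm_eq_abs, abs_of_nonneg (Finset.prod_nonneg fun i _ => (hbdd i ω).1)]
    exact Finset.prod_le_one (fun i _ => (hbdd i ω).1) fun i _ => (hbdd i ω).2
  -- measurability / integrability of the exponential
  have hsum_meas : Measurable fun ω => ∑ i, Y i ω :=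
    Finset.measurable_sum Finset.univ fun i _ => hmeas i
  have hexp_meas : Measurable fun ω => Real.exp (t * ∑ i, Y i ω) :=
    (hsum_meas.const_mul t).exp
  have hexp_int : Integrable (fun ω => Real.exp (t * ∑ i, Y i ω)) μ := by
    refine (integrable_const (Real.exp (t * m))).mono' hexp_meas.aestronglyMeasurable ?_
    filter_upwards with ω
    rw [Real.norm_eq_abs, abs_of_nonneg (Real.exp_pos _).le, Real.exp_le_exp]
    have hs : ∑ i, Y i ω ≤ (m : ℝ) := by
      calc ∑ i, Y i ω ≤ ∑ _i : Fin m, (1:ℝ) :=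
            Finset.sum_le_sum fun i _ => (hbdd i ω).2
        _ = (m : ℝ) := by simp
    exact mul_le_mul_of_nonneg_left hs ht_pos.le
  have hprod_int : Integrable (fun ω => ∏ i, (1 + ε * Y i ω)) μ := by
    simp_rw [expand_prod_one_add ε]
    exact integrable_finset_sum _ fun U _ => (hintU U).const_mul _
  -- pointwise bound exp(t * ∑ Y) ≤ ∏ (1 + ε Y)
  have hpt : ∀ ω, Real.exp (t * ∑ i, Y i ω) ≤ ∏ i, (1 + ε * Y i ω) := by
    intro ω
    rw [Finset.mul_sum, Real.exp_sum]
    refine Finset.prod_le_prod (fun i _ => (Real.exp_pos _).le) fun i _ => ?_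
    obtain ⟨hy0, hy1⟩ := hbdd i ω
    have hc := convexOn_exp.2 (Set.mem_univ (0:ℝ)) (Set.mem_univ t)
      (by linarith : (0:ℝ) ≤ 1 - Y i ω) hy0 (by ring)
    simp only [smul_eq_mul, mul_zero, zero_add, Real.exp_zero, mul_one] at hc
    rw [hexpt] at hc
    calc Real.exp (t * Y i ω) = Real.exp (Y i ω * t) := by rw [mul_comm]
      _ ≤ (1 - Y i ω) + Y i ω * (1 + ε) := hc
      _ = 1 + ε * Y i ω := by ring
  -- step A : expectation of the product
  have hA : (∫ ω, ∏ i, (1 + ε * Y i ω) ∂μ) ≤ ∏ i, (1 + ε * ∫ ω', Y i ω' ∂μ) := by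
    calc ∫ ω, ∏ i, (1 + ε * Y i ω) ∂μ
        = ∫ ω, ∑ U ∈ Finset.univ.powerset, ε ^ U.card * ∏ i ∈ U, Y i ω ∂μ := by
          simp_rw [expand_prod_one_add ε]
      _ = ∑ U ∈ Finset.univ.powerset, ∫ ω, ε ^ U.card * ∏ i ∈ U, Y i ω ∂μ :=
          integral_finset_sum _ fun U _ => (hintU U).const_mul _
      _ = ∑ U ∈ Finset.univ.powerset, ε ^ U.card * ∫ ω, ∏ i ∈ U, Y i ω ∂μ := by
          simp_rw [integral_const_mul]
      _ ≤ ∑ U ∈ Finset.univ.powerset, ε ^ U.card * ∏ i ∈ U, ∫ ω', Y i ω' ∂μ :=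
          Finset.sum_le_sum fun U _ =>
            mul_le_mul_of_nonneg_left (hcorr U) (by positivity)
      _ = ∏ i, (1 + ε * ∫ ω', Y i ω' ∂μ) :=
          (expand_prod_one_add ε fun i => ∫ ω', Y i ω' ∂μ).symm
  -- step B : bound the product by exp(ε M)
  have hB : ∏ i, (1 + ε * ∫ ω', Y i ω' ∂μ) ≤ Real.exp (ε * M) := by
    rw [hMdef, Finset.mul_sum, Real.exp_sum]
    refine Finset.prod_le_prod (fun i _ => by nlinarith [hμi_nonneg i]) fun i _ => ?_
    linarith [Real.add_one_le_exp (ε * ∫ ω', Y i ω' ∂μ)]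
  have hchain : (∫ ω, Real.exp (t * ∑ i, Y i ω) ∂μ) ≤ Real.exp (ε * M) :=
    le_trans (integral_mono hexp_int hprod_int hpt) (le_trans hA hB)
  -- Markov
  have hEvent : {ω | (1 + ε) * M ≤ ∑ i, Y i ω}
      = {ω | Real.exp (t * ((1 + ε) * M)) ≤ Real.exp (t * ∑ i, Y i ω)} := by
    ext ω
    simp only [Set.mem_setOf_eq, Real.exp_le_exp]
    exact (mul_le_mul_iff_right₀ ht_pos).symm
  have hmarkov := mul_meas_ge_le_integral_of_nonneg
    (μ := μ) (f := fun ω => Real.exp (t * ∑ i, Y i ω))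
    (Filter.Eventually.of_forall fun ω => (Real.exp_pos _).le)
    hexp_int (Real.exp (t * ((1 + ε) * M)))
  have hle : (μ {ω | (1 + ε) * M ≤ ∑ i, Y i ω}).toReal
      ≤ Real.exp (ε * M - t * ((1 + ε) * M)) := by
    rw [hEvent, Real.exp_sub, le_div_iff₀ (Real.exp_pos _), mul_comm]
    exact le_trans hmarkov hchain
  refine le_trans hle ?_
  rw [Real.exp_le_exp]
  -- scalar inequality
  have hlog : 2 * ε / (2 + ε) ≤ t := two_mul_div_le_log hε.le
  have h2ε : (0:ℝ) < 2 + ε := by linarith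
  have hkey : ε - (1 + ε) * t ≤ -(ε ^ 2) / (2 + ε) := by
    have hmul : (1 + ε) * (2 * ε / (2 + ε)) ≤ (1 + ε) * t :=
      mul_le_mul_of_nonneg_left hlog (by linarith)
    have heq : ε - (1 + ε) * (2 * ε / (2 + ε)) = -(ε ^ 2) / (2 + ε) := by
      field_simp
      ring
    linarith
  calc ε * M - t * ((1 + ε) * M) = (ε - (1 + ε) * t) * M := by ring
    _ ≤ -(ε ^ 2) / (2 + ε) * M := mul_le_mul_of_nonneg_right hkey hM_nonneg
    _ = -(ε ^ 2 * M) / (2 + ε) := by ring
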